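/- Let α > 2, θ > 0, R > 0, and let m > 2/α be a real number. Let W and H be independent random variables, each distributed according to the gamma distribution with shape m and rate m (i.e., with density m^m x^{m−1} e^{−mx}/Γ(m) on (0,∞)). Then ∫_{ℝ²} ℙ( W·‖x‖^α ≤ H·θ·R^α ) dx = π θ^{2/α} R² · Γ(m − 2/α) Γ(m + 2/α) / Γ(m)². -/

import Mathlib

open MeasureTheory ProbabilityTheory Real Set

lemma gamma_moment {m p : ℝ} (hm : 0 < m) (hmp : 0 < m + p) :
    ∫⁻ x, ENNReal.ofReal (x ^ p) ∂(gammaMeasure m m) =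
      ENNReal.ofReal (Gamma (m + p) / (Gamma m * m ^ p)) := by
  have hmeas : Measurable fun x : ℝ => ENNReal.ofReal (x ^ p) :=
    (measurable_id'.pow_const p).ennreal_ofReal
  have hpdf : Measurable (gammaPDF m m) :=
    (measurable_gammaPDFReal m m).ennreal_ofReal
  rw [gammaMeasure, lintegral_withDensity_eq_lintegral_mul _ hpdf hmeas]
  have hsplit := lintegral_add_compl
    (fun x => (gammaPDF m m * fun x : ℝ => ENNReal.ofReal (x ^ p)) x)
    (measurableSet_Iic (a := (0:ℝ))) (μ := volume)
  rw [← hsplit, compl_Iic]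
  have left : ∫⁻ x in Iic (0:ℝ),
      (gammaPDF m m * fun x : ℝ => ENNReal.ofReal (x ^ p)) x = 0 := by
    rw [setLIntegral_congr (Iio_ae_eq_Iic (a := (0:ℝ))).symm]
    rw [setLIntegral_congr_fun (g := fun _ => 0) measurableSet_Iio
      (fun x (hx : x < 0) => by
        simp [Pi.mul_apply, gammaPDF_of_neg hx]), lintegral_zero]
  rw [left, zero_add]
  have right : ∫⁻ x in Ioi (0:ℝ),
      (gammaPDF m m * fun x : ℝ => ENNReal.ofReal (x ^ p)) x
      = ∫⁻ x in Ioi (0:ℝ),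
        ENNReal.ofReal (m ^ m / Gamma m * (x ^ (m + p - 1) * exp (-(m * x)))) := by
    apply setLIntegral_congr_fun measurableSet_Ioi
    refine (fun x (hx : 0 < x) => ?_)
    have h1 : x ^ (m-1) * x ^ p = x ^ (m + p - 1) := by
      rw [← Real.rpow_add hx]; ring_nf
    rw [Pi.mul_apply, gammaPDF_of_nonneg hx.le, ← ENNReal.ofReal_mul (by positivity)]
    congr 1
    calc m ^ m / Gamma m * x ^ (m-1) * exp (-(m * x)) * x ^ p
        = m ^ m / Gamma m * (x ^ (m-1) * x ^ p * exp (-(m * x))) := by ring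
      _ = m ^ m / Gamma m * (x ^ (m + p - 1) * exp (-(m * x))) := by rw [h1]
  rw [right]
  have hint : IntegrableOn
      (fun x : ℝ => m ^ m / Gamma m * (x ^ (m + p - 1) * exp (-(m * x)))) (Ioi 0) := by
    have := (integrableOn_rpow_mul_exp_neg_mul_rpow
      (show (-1:ℝ) < m + p - 1 by linarith) zero_lt_one hm)
    simp only [Real.rpow_one] at this
    exact (this.congr_fun (fun x hx => by rw [neg_mul]) measurableSet_Ioi).const_mul _
  rw [← ofReal_integral_eq_lintegral_ofReal hint]
  · rw [integral_const_mul, integral_rpow_mul_exp_neg_mul_Ioi hmp hm]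
    congr 1
    have h2 : (1/m) ^ (m+p) = (m ^ (m+p))⁻¹ := by
      rw [one_div, Real.inv_rpow hm.le]
    have h3 : m ^ (m+p) = m ^ m * m ^ p := Real.rpow_add hm _ _
    have hg : Gamma m ≠ 0 := (Gamma_pos_of_pos hm).ne'
    have hmm : (m:ℝ) ^ m ≠ 0 := (rpow_pos_of_pos hm m).ne'
    have hmp' : (m:ℝ) ^ p ≠ 0 := (rpow_pos_of_pos hm p).ne'
    rw [h2, h3]
    field_simp
  · refine (ae_restrict_iff' measurableSet_Ioi).mpr (ae_of_all _ (fun x (hx : 0 < x) => ?_))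
    positivity

lemma gammaMeasure_Iic_zero (m : ℝ) : gammaMeasure m m (Iic 0) = 0 := by
  rw [gammaMeasure, withDensity_apply _ measurableSet_Iic,
    setLIntegral_congr (Iio_ae_eq_Iic (a := (0:ℝ))).symm,
    lintegral_gammaPDF_of_nonpos le_rfl]

theorem gamma_aloha_nakagami (α θ R m : ℝ) (hα : 2 < α) (hθ : 0 < θ) (hR : 0 < R)
    (hm : 2 / α < m)
    {Ω : Type*} [MeasurableSpace Ω] (μ : Measure Ω) [IsProbabilityMeasure μ]
    (W H : Ω → ℝ) (hWmeas : Measurable W) (hHmeas : Measurable H)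
    (hindep : IndepFun W H μ)
    (hW : Measure.map W μ = gammaMeasure m m)
    (hH : Measure.map H μ = gammaMeasure m m) :
    ∫ x : EuclideanSpace ℝ (Fin 2),
        (μ {ω | W ω * ‖x‖ ^ α ≤ H ω * (θ * R ^ α)}).toReal
      = π * θ ^ (2 / α) * R ^ 2 * (Gamma (m - 2 / α) * Gamma (m + 2 / α)) / Gamma m ^ 2 := by
  have hα0 : (0:ℝ) < α := by linarith
  set q : ℝ := 2 / α with hq
  have hq0 : 0 < q := by positivity
  have hm0 : 0 < m := lt_trans hq0 hm
  set c : ℝ := θ * R ^ α with hc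
  have hc0 : 0 < c := by
    have : (0:ℝ) < R ^ α := rpow_pos_of_pos hR α
    positivity
  set E := EuclideanSpace ℝ (Fin 2)
  set S : Set (E × Ω) := {p | W p.2 * ‖p.1‖ ^ α ≤ H p.2 * c} with hS
  have hSm : MeasurableSet S := by
    apply measurableSet_le
    · exact (hWmeas.comp measurable_snd).mul ((measurable_fst.norm).pow_const α)
    · exact (hHmeas.comp measurable_snd).mul_const c
  have hWpos : ∀ᵐ ω ∂μ, 0 < W ω := by
    have h0 : μ (W ⁻¹' Iic 0) = 0 := by
      rw [← Measure.map_apply hWmeas measurableSet_Iic, hW, gammaMeasure_Iic_zero]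
    rw [ae_iff]; simp only [not_lt]; exact h0
  have hHpos : ∀ᵐ ω ∂μ, 0 < H ω := by
    have h0 : μ (H ⁻¹' Iic 0) = 0 := by
      rw [← Measure.map_apply hHmeas measurableSet_Iic, hH, gammaMeasure_Iic_zero]
    rw [ae_iff]; simp only [not_lt]; exact h0
  have step1 : ∫ x : E, (μ {ω | W ω * ‖x‖ ^ α ≤ H ω * c}).toReal
      = (∫⁻ x : E, μ (Prod.mk x ⁻¹' S)).toReal := by
    rw [← integral_toReal (measurable_measure_prodMk_left hSm).aemeasurable
      (ae_of_all _ (fun x => measure_lt_top μ _))]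
    rfl
  rw [step1]
  have step2 : ∫⁻ x : E, μ (Prod.mk x ⁻¹' S) = ∫⁻ ω, volume ((fun x : E => (x, ω)) ⁻¹' S) ∂μ := by
    rw [← Measure.prod_apply hSm, Measure.prod_apply_symm hSm]
  rw [step2]
  have key : ∀ᵐ ω ∂μ, volume ((fun x : E => (x, ω)) ⁻¹' S) =
      ENNReal.ofReal (π * c ^ q) *
        (ENNReal.ofReal (H ω ^ q) * ENNReal.ofReal (W ω ^ (-q))) := by
    filter_upwards [hWpos, hHpos] with ω hw hh
    have hD : 0 < H ω * c / W ω := by positivity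
    have hr : (0:ℝ) ≤ (H ω * c / W ω) ^ α⁻¹ := (rpow_pos_of_pos hD _).le
    have hset : ((fun x : E => (x, ω)) ⁻¹' S)
        = Metric.closedBall 0 ((H ω * c / W ω) ^ α⁻¹) := by
      ext x
      simp only [Set.mem_preimage, hS, Set.mem_setOf_eq, Metric.mem_closedBall,
        dist_zero_right]
      rw [mul_comm (W ω), ← le_div_iff₀ hw]
      exact (Real.le_rpow_inv_iff_of_pos (norm_nonneg x) hD.le hα0).symm
    rw [hset, EuclideanSpace.volume_closedBall]
    have hcard : (Fintype.card (Fin 2) : ℝ) = 2 := by simp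
    rw [show Fintype.card (Fin 2) = 2 from by simp]
    have hGamma : Real.sqrt π ^ (2:ℕ) / Gamma (((2:ℕ):ℝ) / 2 + 1) = π := by
      norm_num
      exact Real.sq_sqrt pi_pos.le
    rw [hGamma]
    have hr2 : ((H ω * c / W ω) ^ α⁻¹) ^ (2:ℕ) = (H ω * c / W ω) ^ q := by
      rw [← Real.rpow_natCast _ 2, ← Real.rpow_mul hD.le]
      congr 1
      rw [hq]
      push_cast
      rw [inv_mul_eq_div]
    have hD2 : (H ω * c / W ω) ^ q = H ω ^ q * c ^ q * W ω ^ (-q) := by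
      rw [Real.div_rpow (by positivity) hw.le, Real.mul_rpow hh.le hc0.le,
        Real.rpow_neg hw.le, div_eq_mul_inv]
    rw [← ENNReal.ofReal_pow hr, hr2, hD2,
      ← ENNReal.ofReal_mul (by positivity),
      ← ENNReal.ofReal_mul (by positivity),
      ← ENNReal.ofReal_mul (by positivity)]
    congr 1
    ring
  rw [lintegral_congr_ae key]
  have measf : Measurable fun ω => ENNReal.ofReal (H ω ^ q) :=
    (hHmeas.pow_const q).ennreal_ofReal
  have measg : Measurable fun ω => ENNReal.ofReal (W ω ^ (-q)) :=
    (hWmeas.pow_const (-q)).ennreal_ofReal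
  rw [lintegral_const_mul _ (by exact measf.mul measg :
    Measurable fun ω => ENNReal.ofReal (H ω ^ q) * ENNReal.ofReal (W ω ^ (-q)))]
  have hfg : IndepFun (fun ω => ENNReal.ofReal (H ω ^ q))
      (fun ω => ENNReal.ofReal (W ω ^ (-q))) μ :=
    hindep.symm.comp ((measurable_id'.pow_const q).ennreal_ofReal)
      ((measurable_id'.pow_const (-q)).ennreal_ofReal)
  rw [lintegral_mul_eq_lintegral_mul_lintegral_of_indepFun'' measf.aemeasurable
    measg.aemeasurable hfg]
  have hHm : ∫⁻ ω, ENNReal.ofReal (H ω ^ q) ∂μ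
      = ENNReal.ofReal (Gamma (m + q) / (Gamma m * m ^ q)) := by
    have hmeasq : Measurable fun x : ℝ => ENNReal.ofReal (x ^ q) :=
      (measurable_id'.pow_const q).ennreal_ofReal
    have h := lintegral_map (μ := μ) hmeasq hHmeas
    rw [hH] at h
    rw [← h]
    exact gamma_moment hm0 (by linarith)
  have hWm : ∫⁻ ω, ENNReal.ofReal (W ω ^ (-q)) ∂μ
      = ENNReal.ofReal (Gamma (m + -q) / (Gamma m * m ^ (-q))) := by
    have hmeasq : Measurable fun x : ℝ => ENNReal.ofReal (x ^ (-q)) :=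
      (measurable_id'.pow_const (-q)).ennreal_ofReal
    have h := lintegral_map (μ := μ) hmeasq hWmeas
    rw [hW] at h
    rw [← h]
    exact gamma_moment hm0 (by linarith)
  rw [hHm, hWm]
  have hA : (0:ℝ) ≤ Gamma (m + q) / (Gamma m * m ^ q) := by
    have := Gamma_pos_of_pos (show 0 < m + q by linarith)
    have := Gamma_pos_of_pos hm0
    have := rpow_pos_of_pos hm0 q
    positivity
  have hB : (0:ℝ) ≤ Gamma (m + -q) / (Gamma m * m ^ (-q)) := by
    have := Gamma_pos_of_pos (show 0 < m + -q by linarith)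
    have := Gamma_pos_of_pos hm0
    have := rpow_pos_of_pos hm0 (-q)
    positivity
  rw [← ENNReal.ofReal_mul hA, ← ENNReal.ofReal_mul (by positivity),
    ENNReal.toReal_ofReal (by positivity)]
  -- real arithmetic
  have hcq : c ^ q = θ ^ q * R ^ (2:ℕ) := by
    rw [hc, Real.mul_rpow hθ.le (rpow_pos_of_pos hR α).le,
      ← Real.rpow_natCast R 2, ← Real.rpow_mul hR.le]
    congr 1
    rw [hq]; field_simp
    norm_num
  have hmq : m ^ (-q) = (m ^ q)⁻¹ := Real.rpow_neg hm0.le q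
  have hsub : m + -q = m - q := by ring
  rw [hcq, hmq, hsub]
  have hg : Gamma m ≠ 0 := (Gamma_pos_of_pos hm0).ne'
  have hmqne : (m:ℝ) ^ q ≠ 0 := (rpow_pos_of_pos hm0 q).ne'
  field_simp
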